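/- In the complementary-labels model with corruption probability α ∈ [0,1), if the class of functions F satisfies Assumption 1, then letting κ'_α = (1+α)/(1−α), the neural network distance satisfies d_F(P, Q) ≤ κ'_α · d_F(P̃, Q̃). (Corollary 2, eq. (16).) -/

import Mathlib

open scoped BigOperators
open MeasureTheory

/-- `P` is a probability mass function on `Z`. -/
def IsPMF {Z : Type*} (P : Z → ℝ) : Prop :=
  (∀ z, 0 ≤ P z) ∧ Summable P ∧ ∑' z, P z = 1

/-- The corrupted labeled distribution obtained by passing labels through the channel `C`:
`P̃(x,ỹ) = ∑ j, P(x,j) · C j ỹ`. -/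
noncomputable def corrupt {X : Type*} {k : ℕ} (P : X × Fin k → ℝ)
    (C : Matrix (Fin k) (Fin k) ℝ) : X × Fin k → ℝ :=
  fun z => ∑ j, P (z.1, j) * C j z.2

/-- Parameter vector of the complementary label `u_y = m + y`: mass `a/(m−1)` on every
class label other than `y`, zero elsewhere. -/
noncomputable def compAlpha (m : ℕ) (a : ℝ) (y : Fin m) : Fin (m + m) → ℝ :=
  fun j => if (j : ℕ) < m ∧ (j : ℕ) ≠ (y : ℕ) then a / ((m : ℝ) - 1) else 0

/-- Confusion matrix of the complementary-labels model:
`C = diag(𝟙 − Σ_y α_{u_y}) + Σ_y α_{u_y} e_{m+y}^T`. -/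
noncomputable def compConfusion (m : ℕ) (a : ℝ) :
    Matrix (Fin (m + m)) (Fin (m + m)) ℝ :=
  Matrix.diagonal (fun i => 1 - ∑ y : Fin m, compAlpha m a y i) +
    ∑ y : Fin m, Matrix.vecMulVec (compAlpha m a y) (Pi.single (Fin.natAdd m y) 1)

/-- `‖T‖_∞ = max_i ∑_j |T i j|` for a square real matrix. -/
noncomputable def matInfNorm {k : ℕ} (T : Matrix (Fin k) (Fin k) ℝ) : ℝ :=
  ⨆ i, ∑ j, |T i j|

/-- `(T ∘ f)(x, y) = ∑_ỹ T y ỹ · f (x, ỹ)`. -/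
def chanOp {X : Type*} {k : ℕ} (T : Matrix (Fin k) (Fin k) ℝ)
    (f : X × Fin k → ℝ) : X × Fin k → ℝ :=
  fun z => ∑ j, T z.2 j * f (z.1, j)

/-- Assumption 1: `F = F₁ + F₂ + constants`, where `F₁` is invariant under the action of
matrices of unit `∞`-norm, and `F₂` consists of `[0,1]`-scalings of label-independent
functions from a class `F₂'`. -/
def Assumption1 {X : Type*} {k : ℕ} (F : Set (X × Fin k → ℝ)) : Prop :=
  ∃ F1 F2 : Set (X × Fin k → ℝ),
    F = {f | ∃ f1 ∈ F1, ∃ f2 ∈ F2, ∃ c : ℝ, f = f1 + f2 + Function.const _ c} ∧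
    (∀ T : Matrix (Fin k) (Fin k) ℝ, matInfNorm T = 1 → ∀ f ∈ F1, chanOp T f ∈ F1) ∧
    (∃ F2' : Set (X → ℝ),
      F2 = {h | ∃ g ∈ F2', ∃ a : ℝ, 0 ≤ a ∧ a ≤ 1 ∧ h = fun z => a * g z.1})

/-- Neural network distance w.r.t. a class `F` of discriminators:
`d_F(P, Q) = sup_{f ∈ F} (E_P[f] − E_Q[f])`. -/
noncomputable def nnDist {X : Type*} {k : ℕ} (F : Set (X × Fin k → ℝ))
    (P Q : X × Fin k → ℝ) : ℝ :=
  sSup ((fun f => (∑' z, P z * f z) - ∑' z, Q z * f z) '' F)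

section Aux

lemma fin_sum_ite_eq {n t : ℕ} (v : Fin n → ℝ) :
    ∑ l : Fin n, (if (l : ℕ) = t then v l else 0) =
      if h : t < n then v ⟨t, h⟩ else 0 := by
  split_ifs with h
  · rw [Finset.sum_eq_single (⟨t, h⟩ : Fin n)]
    · simp
    · intro b _ hb; rw [if_neg]; intro hbt; exact hb (Fin.ext hbt)
    · intro hmem; exact absurd (Finset.mem_univ _) hmem
  · exact Finset.sum_eq_zero fun l _ => by
      rw [if_neg]; intro hl; exact h (hl ▸ l.isLt)

lemma fin_sum_ite_ne {n t : ℕ} (ht : t < n) (c : ℝ) :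
    ∑ y : Fin n, (if (y : ℕ) ≠ t then c else 0) = ((n : ℝ) - 1) * c := by
  have : ∀ y : Fin n, (if (y : ℕ) ≠ t then c else 0) =
      c - (if (y : ℕ) = t then c else 0) := by
    intro y; by_cases h : (y : ℕ) = t <;> simp [h]
  rw [Finset.sum_congr rfl fun y _ => this y, Finset.sum_sub_distrib,
    fin_sum_ite_eq (fun _ => c), Finset.sum_const, dif_pos ht]
  simp [sub_one_mul]

lemma compConfusion_apply (m : ℕ) (hm : 2 ≤ m) (a : ℝ) (i j : Fin (m + m)) :
    compConfusion m a i j =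
      if (i : ℕ) < m then
        (if (j : ℕ) = (i : ℕ) then 1 - a
         else if m ≤ (j : ℕ) ∧ (j : ℕ) ≠ m + (i : ℕ) then a / ((m : ℝ) - 1) else 0)
      else if (j : ℕ) = (i : ℕ) then 1 else 0 := by
  have hm1 : ((m : ℝ) - 1) ≠ 0 := by
    have : (2 : ℝ) ≤ (m : ℝ) := by exact_mod_cast hm
    linarith
  have hsum1 : ∑ y : Fin m, compAlpha m a y i = if (i : ℕ) < m then a else 0 := by
    unfold compAlpha
    split_ifs with hi
    · have : ∀ y : Fin m,
          (if (i : ℕ) < m ∧ (i : ℕ) ≠ (y : ℕ) then a / ((m : ℝ) - 1) else 0) =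
          (if (y : ℕ) ≠ (i : ℕ) then a / ((m : ℝ) - 1) else 0) := by
        intro y; by_cases h : (y : ℕ) = (i : ℕ)
        · simp [h]
        · rw [if_pos ⟨hi, Ne.symm h⟩, if_pos h]
      rw [Finset.sum_congr rfl fun y _ => this y, fin_sum_ite_ne hi]
      field_simp
    · exact Finset.sum_eq_zero fun y _ => by rw [if_neg]; tauto
  have hsum2 : ∀ v : Fin m → ℝ,
      ∑ y : Fin m, v y * ((Pi.single (Fin.natAdd m y) (1:ℝ) : Fin (m+m) → ℝ) j) =
      if h : m ≤ (j : ℕ) then v ⟨(j : ℕ) - m, by omega⟩ else 0 := by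
    intro v
    have : ∀ y : Fin m, v y * ((Pi.single (Fin.natAdd m y) (1:ℝ) : Fin (m+m) → ℝ) j) =
        (if (y : ℕ) = (j : ℕ) - m ∧ m ≤ (j : ℕ) then v y else 0) := by
      intro y
      rw [Pi.single_apply]
      by_cases h : j = Fin.natAdd m y
      · have hj : (j : ℕ) = m + (y : ℕ) := by rw [h, Fin.coe_natAdd]
        rw [if_pos h, if_pos ⟨by omega, by omega⟩, mul_one]
      · rw [if_neg h, mul_zero, if_neg]
        rintro ⟨h1, h2⟩
        exact h (Fin.ext (by simp [Fin.natAdd]; omega))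
    rw [Finset.sum_congr rfl fun y _ => this y]
    split_ifs with h
    · have : ∀ y : Fin m, (if (y : ℕ) = (j : ℕ) - m ∧ m ≤ (j : ℕ) then v y else 0)
          = (if (y : ℕ) = (j : ℕ) - m then v y else 0) := by
        intro y; simp [h]
      rw [Finset.sum_congr rfl fun y _ => this y, fin_sum_ite_eq v, dif_pos (by omega : (j:ℕ) - m < m)]
    · exact Finset.sum_eq_zero fun y _ => by rw [if_neg]; tauto
  unfold compConfusion
  rw [Matrix.add_apply, Matrix.diagonal_apply, Matrix.sum_apply]
  simp only [Matrix.vecMulVec_apply]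
  rw [hsum2 (fun y => compAlpha m a y i), hsum1]
  unfold compAlpha
  by_cases hij : i = j
  · subst hij
    by_cases hi : (i : ℕ) < m
    · rw [if_pos rfl, if_pos hi, if_pos hi, if_pos rfl, dif_neg (by omega)]
      ring
    · rw [if_pos rfl, if_neg hi, if_neg hi, if_pos rfl]
      rw [dif_pos (by omega : m ≤ (i : ℕ)), if_neg (by omega)]
      ring
  · have hijn : (j : ℕ) ≠ (i : ℕ) := fun h => hij (Fin.ext h.symm)
    rw [if_neg hij, zero_add]
    by_cases hi : (i : ℕ) < m
    · rw [if_pos hi, if_neg hijn]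
      by_cases hj : m ≤ (j : ℕ)
      · rw [dif_pos hj]
        by_cases hji : (j : ℕ) = m + (i : ℕ)
        · rw [if_neg (by simp only [Fin.val_mk]; omega),
            if_neg (by push_neg; intro _; omega)]
        · rw [if_pos ⟨hi, by simp only [Fin.val_mk]; omega⟩, if_pos ⟨hj, hji⟩]
      · rw [dif_neg hj, if_neg (by tauto)]
    · rw [if_neg hi, if_neg hijn]
      by_cases hj : m ≤ (j : ℕ)
      · rw [dif_pos hj, if_neg (by push_neg; intro h; omega)]
      · rw [dif_neg hj]

noncomputable def compInv (m : ℕ) (a : ℝ) : Matrix (Fin (m + m)) (Fin (m + m)) ℝ :=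
  fun i j =>
    if (i : ℕ) < m then
      (if (j : ℕ) = (i : ℕ) then 1 / (1 - a)
       else if m ≤ (j : ℕ) ∧ (j : ℕ) ≠ m + (i : ℕ) then
         -(a / (((m : ℝ) - 1) * (1 - a))) else 0)
    else if (j : ℕ) = (i : ℕ) then 1 else 0

lemma compConfusion_mul_compInv (m : ℕ) (hm : 2 ≤ m) (a : ℝ) (ha1 : a < 1)
    (i j : Fin (m + m)) :
    ∑ l, compConfusion m a i l * compInv m a l j =
      if (j : ℕ) = (i : ℕ) then 1 else 0 := by
  have hm1 : (0:ℝ) < (m : ℝ) - 1 := by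
    have : (2 : ℝ) ≤ (m : ℝ) := by exact_mod_cast hm
    linarith
  have ha' : (0:ℝ) < 1 - a := by linarith
  by_cases hi : (i : ℕ) < m
  · have key : ∀ l : Fin (m + m), compConfusion m a i l * compInv m a l j =
        (if (l : ℕ) = (i : ℕ) then (1 - a) * compInv m a i j else 0) +
        (if (l : ℕ) = (j : ℕ) then
           (if m ≤ (j : ℕ) ∧ (j : ℕ) ≠ m + (i : ℕ) then a / ((m : ℝ) - 1) else 0)
         else 0) := by
      intro l
      rw [compConfusion_apply m hm, if_pos hi]
      unfold compInv
      by_cases hli : (l : ℕ) = (i : ℕ)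
      · have hl : l = i := Fin.ext hli
        subst hl
        rw [if_pos rfl, if_pos rfl, if_pos hi]
        have hz : (if (l : ℕ) = (j : ℕ) then
            (if m ≤ (j:ℕ) ∧ (j:ℕ) ≠ m + (l:ℕ) then a / ((m:ℝ)-1) else 0) else 0) = 0 := by
          split_ifs with h1 h2
          · exact absurd h2.1 (by omega)
          · rfl
          · rfl
        rw [hz, add_zero]
      · rw [if_neg hli, if_neg hli]
        by_cases hlm : (l : ℕ) < m
        · rw [if_neg (by omega : ¬(m ≤ (l:ℕ) ∧ (l:ℕ) ≠ m + (i:ℕ))), zero_mul]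
          have hz : (if (l : ℕ) = (j : ℕ) then
              (if m ≤ (j:ℕ) ∧ (j:ℕ) ≠ m + (i:ℕ) then a / ((m:ℝ)-1) else 0) else 0) = 0 := by
            split_ifs with h1 h2
            · exact absurd h2.1 (by omega)
            · rfl
            · rfl
          rw [hz, add_zero]
        · rw [if_neg hlm]
          by_cases hlj : (l : ℕ) = (j : ℕ)
          · rw [if_pos hlj.symm, mul_one, if_pos hlj, zero_add, hlj]
          · rw [if_neg (fun h : (j:ℕ) = (l:ℕ) => hlj h.symm), mul_zero, if_neg hlj,
              add_zero]
    rw [Finset.sum_congr rfl fun l _ => key l, Finset.sum_add_distrib,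
      fin_sum_ite_eq, fin_sum_ite_eq, dif_pos i.isLt, dif_pos j.isLt]
    unfold compInv
    rw [if_pos hi]
    by_cases hji : (j : ℕ) = (i : ℕ)
    · rw [if_pos hji, if_pos hji, if_neg (by omega : ¬(m ≤ (j:ℕ) ∧ (j:ℕ) ≠ m + (i:ℕ)))]
      field_simp
      norm_num
    · rw [if_neg hji, if_neg hji]
      by_cases hc : m ≤ (j : ℕ) ∧ (j : ℕ) ≠ m + (i : ℕ)
      · rw [if_pos hc, if_pos hc]
        field_simp
        ring
      · rw [if_neg hc, if_neg hc]; ring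
  · have key : ∀ l : Fin (m + m), compConfusion m a i l * compInv m a l j =
        (if (l : ℕ) = (i : ℕ) then compInv m a i j else 0) := by
      intro l
      rw [compConfusion_apply m hm, if_neg hi]
      by_cases hli : (l : ℕ) = (i : ℕ)
      · rw [if_pos hli, if_pos hli, one_mul]
        congr 1
        exact Fin.ext hli
      · rw [if_neg hli, if_neg hli, zero_mul]
    rw [Finset.sum_congr rfl fun l _ => key l, fin_sum_ite_eq, dif_pos i.isLt]
    unfold compInv
    rw [if_neg hi]

lemma compConfusion_rowsum (m : ℕ) (hm : 2 ≤ m) (a : ℝ) (i : Fin (m + m)) :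
    ∑ j, compConfusion m a i j = 1 := by
  have hm1 : (0:ℝ) < (m : ℝ) - 1 := by
    have : (2 : ℝ) ≤ (m : ℝ) := by exact_mod_cast hm
    linarith
  by_cases hi : (i : ℕ) < m
  · have key : ∀ j : Fin (m + m), compConfusion m a i j =
        (if (j : ℕ) = (i : ℕ) then 1 - a else 0) +
        (if m ≤ (j : ℕ) ∧ (j : ℕ) ≠ m + (i : ℕ) then a / ((m : ℝ) - 1) else 0) := by
      intro j
      rw [compConfusion_apply m hm, if_pos hi]
      by_cases h1 : (j : ℕ) = (i : ℕ)
      · rw [if_pos h1, if_pos h1, if_neg (by omega : ¬(m ≤ (j:ℕ) ∧ (j:ℕ) ≠ m + (i:ℕ)))]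
        ring
      · rw [if_neg h1, if_neg h1, zero_add]
    rw [Finset.sum_congr rfl fun j _ => key j, Finset.sum_add_distrib, fin_sum_ite_eq,
      dif_pos i.isLt]
    have h2 : ∑ j : Fin (m + m),
        (if m ≤ (j : ℕ) ∧ (j : ℕ) ≠ m + (i : ℕ) then a / ((m : ℝ) - 1) else 0) =
        ((m : ℝ) - 1) * (a / ((m : ℝ) - 1)) := by
      rw [Fin.sum_univ_add]
      have e1 : ∑ j : Fin m,
          (if m ≤ ((Fin.castAdd m j : Fin (m+m)) : ℕ) ∧
            ((Fin.castAdd m j : Fin (m+m)) : ℕ) ≠ m + (i : ℕ) then a / ((m : ℝ) - 1) else 0)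
          = 0 := Finset.sum_eq_zero fun j _ => by
        rw [if_neg]; simp only [Fin.coe_castAdd]; omega
      have e2 : ∀ j : Fin m,
          (if m ≤ ((Fin.natAdd m j : Fin (m+m)) : ℕ) ∧
            ((Fin.natAdd m j : Fin (m+m)) : ℕ) ≠ m + (i : ℕ) then a / ((m : ℝ) - 1) else 0)
          = (if (j : ℕ) ≠ (i : ℕ) then a / ((m : ℝ) - 1) else 0) := by
        intro j
        simp only [Fin.coe_natAdd]
        by_cases h : (j : ℕ) = (i : ℕ)
        · rw [if_neg (by omega), if_neg (by omega)]
        · rw [if_pos ⟨by omega, by omega⟩, if_pos h]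
      rw [e1, zero_add, Finset.sum_congr rfl fun j _ => e2 j, fin_sum_ite_ne hi]
    rw [h2]
    field_simp
    ring
  · have key : ∀ j : Fin (m + m), compConfusion m a i j =
        (if (j : ℕ) = (i : ℕ) then 1 else 0) := by
      intro j; rw [compConfusion_apply m hm, if_neg hi]
    rw [Finset.sum_congr rfl fun j _ => key j, fin_sum_ite_eq, dif_pos i.isLt]

lemma compConfusion_nonneg (m : ℕ) (hm : 2 ≤ m) (a : ℝ) (ha0 : 0 ≤ a) (ha1 : a < 1)
    (i j : Fin (m + m)) : 0 ≤ compConfusion m a i j := by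
  have hm1 : (0:ℝ) < (m : ℝ) - 1 := by
    have : (2 : ℝ) ≤ (m : ℝ) := by exact_mod_cast hm
    linarith
  rw [compConfusion_apply m hm]
  have h1 : (0:ℝ) ≤ 1 - a := by linarith
  have h2 : (0:ℝ) ≤ a / ((m:ℝ) - 1) := div_nonneg ha0 hm1.le
  split_ifs <;> first | linarith | norm_num

lemma compInv_abs_rowsum (m : ℕ) (hm : 2 ≤ m) (a : ℝ) (ha0 : 0 ≤ a) (ha1 : a < 1)
    (i : Fin (m + m)) :
    ∑ j, |compInv m a i j| = if (i : ℕ) < m then (1 + a) / (1 - a) else 1 := by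
  have hm1 : (0:ℝ) < (m : ℝ) - 1 := by
    have : (2 : ℝ) ≤ (m : ℝ) := by exact_mod_cast hm
    linarith
  have ha' : (0:ℝ) < 1 - a := by linarith
  by_cases hi : (i : ℕ) < m
  · have key : ∀ j : Fin (m + m), |compInv m a i j| =
        (if (j : ℕ) = (i : ℕ) then 1 / (1 - a) else 0) +
        (if m ≤ (j : ℕ) ∧ (j : ℕ) ≠ m + (i : ℕ) then a / (((m : ℝ) - 1) * (1 - a)) else 0) := by
      intro j
      unfold compInv
      rw [if_pos hi]
      by_cases h1 : (j : ℕ) = (i : ℕ)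
      · rw [if_pos h1, if_pos h1, if_neg (by omega : ¬(m ≤ (j:ℕ) ∧ (j:ℕ) ≠ m + (i:ℕ))),
          add_zero, abs_of_pos (div_pos one_pos ha')]
      · rw [if_neg h1, if_neg h1, zero_add]
        by_cases hc : m ≤ (j : ℕ) ∧ (j : ℕ) ≠ m + (i : ℕ)
        · rw [if_pos hc, if_pos hc, abs_neg,
            abs_of_nonneg (div_nonneg ha0 (mul_pos hm1 ha').le)]
        · rw [if_neg hc, if_neg hc, abs_zero]
    rw [Finset.sum_congr rfl fun j _ => key j, Finset.sum_add_distrib, fin_sum_ite_eq,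
      dif_pos i.isLt, if_pos hi]
    have h2 : ∑ j : Fin (m + m),
        (if m ≤ (j : ℕ) ∧ (j : ℕ) ≠ m + (i : ℕ) then a / (((m : ℝ) - 1) * (1 - a)) else 0) =
        ((m : ℝ) - 1) * (a / (((m : ℝ) - 1) * (1 - a))) := by
      rw [Fin.sum_univ_add]
      have e1 : ∑ j : Fin m,
          (if m ≤ ((Fin.castAdd m j : Fin (m+m)) : ℕ) ∧
            ((Fin.castAdd m j : Fin (m+m)) : ℕ) ≠ m + (i : ℕ)
           then a / (((m : ℝ) - 1) * (1 - a)) else 0) = 0 :=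
        Finset.sum_eq_zero fun j _ => by
          rw [if_neg]; simp only [Fin.coe_castAdd]; omega
      have e2 : ∀ j : Fin m,
          (if m ≤ ((Fin.natAdd m j : Fin (m+m)) : ℕ) ∧
            ((Fin.natAdd m j : Fin (m+m)) : ℕ) ≠ m + (i : ℕ)
           then a / (((m : ℝ) - 1) * (1 - a)) else 0)
          = (if (j : ℕ) ≠ (i : ℕ) then a / (((m : ℝ) - 1) * (1 - a)) else 0) := by
        intro j
        simp only [Fin.coe_natAdd]
        by_cases h : (j : ℕ) = (i : ℕ)
        · rw [if_neg (by omega), if_neg (by omega)]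
        · rw [if_pos ⟨by omega, by omega⟩, if_pos h]
      rw [e1, zero_add, Finset.sum_congr rfl fun j _ => e2 j, fin_sum_ite_ne hi]
    rw [h2]
    field_simp
  · have key : ∀ j : Fin (m + m), |compInv m a i j| =
        (if (j : ℕ) = (i : ℕ) then 1 else 0) := by
      intro j
      unfold compInv
      rw [if_neg hi]
      split_ifs <;> simp
    rw [Finset.sum_congr rfl fun j _ => key j, fin_sum_ite_eq, dif_pos i.isLt, if_neg hi]

lemma summable_marg {X : Type*} [Countable X] {k : ℕ} (P : X × Fin k → ℝ)
    (hP0 : ∀ z, 0 ≤ P z) (hPs : Summable P) :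
    Summable (fun x => ∑ j, P (x, j)) := by
  have := ((summable_prod_of_nonneg (fun z => hP0 z)).mp hPs).2
  simpa [tsum_fintype] using this

lemma summable_aux {X : Type*} [Countable X] {k : ℕ} (P : X × Fin k → ℝ)
    (hP0 : ∀ z, 0 ≤ P z) (hPs : Summable P) (h : X × Fin k → ℝ) (B : ℝ)
    (hb : ∀ z : X × Fin k, |h z| ≤ B * ∑ j, P (z.1, j)) : Summable h := by
  have hBnn : ∀ z : X × Fin k, 0 ≤ B * ∑ j, P (z.1, j) :=
    fun z => le_trans (abs_nonneg _) (hb z)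
  have hg : Summable (fun z : X × Fin k => B * ∑ j, P (z.1, j)) := by
    rw [summable_prod_of_nonneg (fun z => hBnn z)]
    constructor
    · intro x; exact Summable.of_finite
    · have : Summable (fun x : X => (k : ℝ) * (B * ∑ j, P (x, j))) :=
        (Summable.mul_left B (summable_marg P hP0 hPs)).mul_left _
      simpa [tsum_fintype, Finset.sum_const, mul_comm] using this
  exact summable_abs_iff.mp (Summable.of_nonneg_of_le (fun z => abs_nonneg _) hb hg)

lemma tsum_corrupt {X : Type*} [Countable X] {k : ℕ} (P : X × Fin k → ℝ)
    (hP0 : ∀ z, 0 ≤ P z) (hPs : Summable P)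
    (C : Matrix (Fin k) (Fin k) ℝ) (f : X × Fin k → ℝ) (B : ℝ) (hf : ∀ z, |f z| ≤ B) :
    ∑' z, corrupt P C z * f z = ∑' z, P z * chanOp C f z := by
  set K : ℝ := ∑ p : Fin k × Fin k, |C p.1 p.2| with hK
  have hKnn : 0 ≤ K := Finset.sum_nonneg fun _ _ => abs_nonneg _
  have hCle : ∀ i j : Fin k, |C i j| ≤ K := by
    intro i j
    exact Finset.single_le_sum (f := fun p : Fin k × Fin k => |C p.1 p.2|)
      (fun _ _ => abs_nonneg _) (Finset.mem_univ (i, j))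
  have hBnn : ∀ z, |f z| ≤ |B| := fun z => le_trans (hf z) (le_abs_self B)
  have hmargnn : ∀ (x : X), (0:ℝ) ≤ ∑ j, P (x, j) :=
    fun x => Finset.sum_nonneg fun j _ => hP0 _
  have S1 : Summable (fun z : X × Fin k => corrupt P C z * f z) := by
    apply summable_aux P hP0 hPs _ (K * |B|)
    intro z
    rw [abs_mul]
    calc |corrupt P C z| * |f z| ≤ (K * ∑ j, P (z.1, j)) * |B| := by
          apply mul_le_mul _ (hBnn z) (abs_nonneg _)
          · apply mul_nonneg hKnn (hmargnn _)
          · unfold corrupt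
            calc |∑ j, P (z.1, j) * C j z.2| ≤ ∑ j, |P (z.1, j) * C j z.2| :=
                  Finset.abs_sum_le_sum_abs _ _
            _ ≤ ∑ j, P (z.1, j) * K := by
                  apply Finset.sum_le_sum
                  intro j _
                  rw [abs_mul, abs_of_nonneg (hP0 _)]
                  exact mul_le_mul_of_nonneg_left (hCle _ _) (hP0 _)
            _ = K * ∑ j, P (z.1, j) := by rw [← Finset.sum_mul]; ring
      _ = K * |B| * ∑ j, P (z.1, j) := by ring
  have S2 : Summable (fun z : X × Fin k => P z * chanOp C f z) := by
    apply summable_aux P hP0 hPs _ ((k : ℝ) * K * |B|)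
    intro z
    rw [abs_mul, abs_of_nonneg (hP0 _)]
    have h1 : |chanOp C f z| ≤ (k : ℝ) * K * |B| := by
      unfold chanOp
      calc |∑ j, C z.2 j * f (z.1, j)| ≤ ∑ j, |C z.2 j * f (z.1, j)| :=
            Finset.abs_sum_le_sum_abs _ _
        _ ≤ ∑ _j : Fin k, K * |B| := by
            apply Finset.sum_le_sum
            intro j _
            rw [abs_mul]
            exact mul_le_mul (hCle _ _) (hBnn _) (abs_nonneg _) hKnn
        _ = (k : ℝ) * K * |B| := by simp [Finset.sum_const, mul_assoc]
    have h2 : P z ≤ ∑ j, P (z.1, j) :=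
      Finset.single_le_sum (f := fun j => P (z.1, j)) (fun j _ => hP0 _)
        (Finset.mem_univ z.2)
    calc P z * |chanOp C f z| ≤ (∑ j, P (z.1, j)) * ((k:ℝ) * K * |B|) :=
          mul_le_mul h2 h1 (abs_nonneg _) (hmargnn _)
      _ = (k:ℝ) * K * |B| * ∑ j, P (z.1, j) := by ring
  rw [Summable.tsum_prod' S1 (fun x => Summable.of_finite),
      Summable.tsum_prod' S2 (fun x => Summable.of_finite)]
  apply tsum_congr
  intro x
  rw [tsum_fintype, tsum_fintype]
  unfold corrupt chanOp
  simp only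
  simp_rw [Finset.sum_mul, Finset.mul_sum]
  rw [Finset.sum_comm]
  apply Finset.sum_congr rfl
  intro j _
  apply Finset.sum_congr rfl
  intro y _
  ring

lemma matInfNorm_of_rowsums {k : ℕ} [NeZero k] (T : Matrix (Fin k) (Fin k) ℝ)
    (h : ∀ i, ∑ j, |T i j| ≤ 1) (h0 : ∃ i, ∑ j, |T i j| = 1) :
    matInfNorm T = 1 := by
  obtain ⟨i0, hi0⟩ := h0
  apply le_antisymm
  · exact ciSup_le h
  · rw [← hi0]
    exact le_ciSup (f := fun i => ∑ j, |T i j|) (Set.Finite.bddAbove (Set.finite_range _)) i0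

lemma matInfNorm_negOne {k : ℕ} [NeZero k] :
    matInfNorm (-1 : Matrix (Fin k) (Fin k) ℝ) = 1 := by
  have habs : ∀ i : Fin k, ∑ j, |(-1 : Matrix (Fin k) (Fin k) ℝ) i j| = 1 := by
    intro i
    have : ∀ j, |(-1 : Matrix (Fin k) (Fin k) ℝ) i j| = if (j:ℕ) = (i:ℕ) then 1 else 0 := by
      intro j
      by_cases h : j = i
      · subst h; simp [Matrix.one_apply]
      · rw [Matrix.neg_apply, Matrix.one_apply, if_neg (Ne.symm h), neg_zero, abs_zero,
          if_neg (fun hc => h (Fin.ext hc))]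
    rw [Finset.sum_congr rfl fun j _ => this j, fin_sum_ite_eq, dif_pos i.isLt]
  exact matInfNorm_of_rowsums _ (fun i => (habs i).le)
    ⟨⟨0, Nat.pos_of_ne_zero (NeZero.ne k)⟩, habs _⟩

lemma chanOp_negOne {X : Type*} {k : ℕ} (f : X × Fin k → ℝ) (z : X × Fin k) :
    chanOp (-1 : Matrix (Fin k) (Fin k) ℝ) f z = -(f z) := by
  unfold chanOp
  have : ∀ j, (-1 : Matrix (Fin k) (Fin k) ℝ) z.2 j * f (z.1, j) =
      (if (j:ℕ) = ((z.2 : Fin k):ℕ) then -(f (z.1, j)) else 0) := by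
    intro j
    by_cases h : j = z.2
    · subst h; simp [Matrix.one_apply]
    · rw [Matrix.neg_apply, Matrix.one_apply, if_neg (fun hc => h hc.symm), neg_zero,
        zero_mul, if_neg (fun hc => h (Fin.ext hc))]
  rw [Finset.sum_congr rfl fun j _ => this j, fin_sum_ite_eq, dif_pos z.2.isLt]

noncomputable def compT (m : ℕ) (a : ℝ) : Matrix (Fin (m + m)) (Fin (m + m)) ℝ :=
  fun i j => ((1 - a) / (1 + a)) * compInv m a i j

lemma compT_norm (m : ℕ) (hm : 2 ≤ m) (a : ℝ) (ha0 : 0 ≤ a) (ha1 : a < 1) :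
    haveI : NeZero (m + m) := ⟨by omega⟩
    matInfNorm (compT m a) = 1 := by
  haveI : NeZero (m + m) := ⟨by omega⟩
  have ha' : (0:ℝ) < 1 - a := by linarith
  have ha'' : (0:ℝ) < 1 + a := by linarith
  have habs : ∀ i : Fin (m + m), ∑ j, |compT m a i j| =
      if (i : ℕ) < m then 1 else (1 - a) / (1 + a) := by
    intro i
    have : ∀ j, |compT m a i j| = ((1 - a) / (1 + a)) * |compInv m a i j| := by
      intro j
      unfold compT
      rw [abs_mul, abs_of_nonneg (div_nonneg ha'.le ha''.le)]
    rw [Finset.sum_congr rfl fun j _ => this j, ← Finset.mul_sum,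
      compInv_abs_rowsum m hm a ha0 ha1]
    split_ifs
    · field_simp
    · rw [mul_one]
  apply matInfNorm_of_rowsums
  · intro i
    rw [habs i]
    split_ifs
    · exact le_refl 1
    · rw [div_le_one ha'']; linarith
  · refine ⟨⟨0, by omega⟩, ?_⟩
    rw [habs, if_pos]
    simpa using by omega

lemma compT_scale (m : ℕ) (a : ℝ) (ha0 : 0 ≤ a) (ha1 : a < 1) (i j : Fin (m + m)) :
    ((1 + a) / (1 - a)) * compT m a i j = compInv m a i j := by
  have ha' : (1:ℝ) - a ≠ 0 := by linarith
  have ha'' : (1:ℝ) + a ≠ 0 := by linarith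
  unfold compT
  field_simp

end Aux


theorem comp_nnDist_bound {X : Type*} [Countable X] {m : ℕ} (hm : 2 ≤ m) (a : ℝ)
    (ha0 : 0 ≤ a) (ha1 : a < 1)
    (P Q : X × Fin (m + m) → ℝ) (hP : IsPMF P) (hQ : IsPMF Q)
    (hPz : ∀ (x : X) (y : Fin (m + m)), m ≤ (y : ℕ) → P (x, y) = 0)
    (hQz : ∀ (x : X) (y : Fin (m + m)), m ≤ (y : ℕ) → Q (x, y) = 0)
    (F : Set (X × Fin (m + m) → ℝ))
    (hFbd : ∀ f ∈ F, ∃ B : ℝ, ∀ z, |f z| ≤ B)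
    (hF : Assumption1 F) :
    nnDist F P Q ≤ ((1 + a) / (1 - a)) *
      nnDist F (corrupt P (compConfusion m a)) (corrupt Q (compConfusion m a)) := by
  haveI hNZ : NeZero (m + m) := ⟨by omega⟩
  obtain ⟨hP0, hPs, hP1⟩ := hP
  obtain ⟨hQ0, hQs, hQ1⟩ := hQ
  obtain ⟨F1, F2, hFeq, hF1inv, F2', hF2eq⟩ := hF
  have ha' : (0:ℝ) < 1 - a := by linarith
  have ha'' : (0:ℝ) < 1 + a := by linarith
  set κ : ℝ := (1 + a) / (1 - a) with hκ
  have hκ0 : 0 < κ := div_pos ha'' ha'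
  have hκ1 : 1 ≤ κ := by rw [hκ, le_div_iff₀ ha']; linarith
  set C : Matrix (Fin (m + m)) (Fin (m + m)) ℝ := compConfusion m a with hC
  have hCabs : ∀ i, ∑ j, |C i j| = 1 := by
    intro i
    have : ∀ j, |C i j| = C i j :=
      fun j => abs_of_nonneg (compConfusion_nonneg m hm a ha0 ha1 i j)
    rw [Finset.sum_congr rfl fun j _ => this j, hC, compConfusion_rowsum m hm]
  have hCnorm : matInfNorm C = 1 :=
    matInfNorm_of_rowsums C (fun i => (hCabs i).le) ⟨⟨0, by omega⟩, hCabs _⟩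
  have hTnorm : matInfNorm (compT m a) = 1 := compT_norm m hm a ha0 ha1
  -- membership of chanOp C f in F, and the corrupted-distance identity
  have hchanC : ∀ f ∈ F, chanOp C f ∈ F := by
    intro f hfF
    rw [hFeq] at hfF ⊢
    obtain ⟨f1, hf1, f2, hf2, c, rfl⟩ := hfF
    have hf2' := hf2
    rw [hF2eq] at hf2'
    obtain ⟨g, hg, a0, ha00, ha01, rfl⟩ := hf2'
    refine ⟨chanOp C f1, hF1inv C hCnorm f1 hf1, _, hf2, c, ?_⟩
    funext z
    simp only [chanOp, Pi.add_apply, Function.const_apply]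
    have : ∀ j : Fin (m + m),
        C z.2 j * (f1 (z.1, j) + a0 * g (z.1, j).1 + c) =
        C z.2 j * f1 (z.1, j) + C z.2 j * (a0 * g z.1 + c) := fun j => by ring
    rw [Finset.sum_congr rfl fun j _ => this j, Finset.sum_add_distrib,
      ← Finset.sum_mul, hC, compConfusion_rowsum m hm, one_mul]
    ring
  have hcorrupt_eq : ∀ f ∈ F,
      ((∑' z, corrupt P C z * f z) - ∑' z, corrupt Q C z * f z) =
      ((∑' z, P z * chanOp C f z) - ∑' z, Q z * chanOp C f z) := by
    intro f hfF
    obtain ⟨B, hB⟩ := hFbd f hfF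
    rw [tsum_corrupt P hP0 hPs C f B hB, tsum_corrupt Q hQ0 hQs C f B hB]
  -- the two distances as suprema of images
  rw [nnDist, nnDist]
  set S : Set ℝ := (fun f => (∑' z, P z * f z) - ∑' z, Q z * f z) '' F with hS
  set S' : Set ℝ :=
    (fun f => (∑' z, corrupt P C z * f z) - ∑' z, corrupt Q C z * f z) '' F with hS'
  have hSS : S' ⊆ S := by
    rintro s ⟨f, hfF, rfl⟩
    exact ⟨chanOp C f, hchanC f hfF, (hcorrupt_eq f hfF).symm⟩
  -- key: every clean difference equals κ times a corrupted difference over F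
  have hkey : ∀ f ∈ F, ∃ h' ∈ F,
      ((∑' z, P z * f z) - ∑' z, Q z * f z) =
      κ * ((∑' z, corrupt P C z * h' z) - ∑' z, corrupt Q C z * h' z) := by
    intro f hfF
    rw [hFeq] at hfF
    obtain ⟨f1, hf1, f2, hf2, c, rfl⟩ := hfF
    have hf2' := hf2
    rw [hF2eq] at hf2'
    obtain ⟨g, hg, a0, ha00, ha01, rfl⟩ := hf2'
    set h' : X × Fin (m + m) → ℝ :=
      chanOp (compT m a) f1 + (fun z => (a0 / κ) * g z.1) + Function.const _ (c / κ)
      with hh'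
    have hh'F : h' ∈ F := by
      rw [hFeq]
      refine ⟨chanOp (compT m a) f1, hF1inv _ hTnorm f1 hf1,
        (fun z => (a0 / κ) * g z.1), ?_, c / κ, rfl⟩
      rw [hF2eq]
      exact ⟨g, hg, a0 / κ, div_nonneg ha00 hκ0.le,
        (div_le_one hκ0).mpr (ha01.trans hκ1), rfl⟩
    refine ⟨h', hh'F, ?_⟩
    obtain ⟨B', hB'⟩ := hFbd h' hh'F
    have hbig : ∀ z, |κ * h' z| ≤ κ * B' := by
      intro z
      rw [abs_mul, abs_of_pos hκ0]
      exact mul_le_mul_of_nonneg_left (hB' z) hκ0.le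
    have hch : ∀ z, chanOp C (fun w => κ * h' w) z =
        (f1 + (fun w : X × Fin (m + m) => a0 * g w.1) + Function.const (X × Fin (m + m)) c) z := by
      intro z
      simp only [chanOp, Pi.add_apply, Function.const_apply]
      have hκh : ∀ j : Fin (m + m), κ * h' (z.1, j) =
          (∑ l, compInv m a j l * f1 (z.1, l)) + (a0 * g z.1 + c) := by
        intro j
        have hrep : h' (z.1, j) =
            (∑ l, compT m a j l * f1 (z.1, l)) + ((a0 / κ) * g z.1 + c / κ) := by
          simp only [hh', Pi.add_apply, Function.const_apply, chanOp]
          ring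
        rw [hrep, mul_add, Finset.mul_sum]
        congr 1
        · apply Finset.sum_congr rfl
          intro l _
          rw [← mul_assoc, hκ, compT_scale m a ha0 ha1]
        · have ne1 : (1:ℝ) - a ≠ 0 := ne_of_gt ha'
          have ne2 : (1:ℝ) + a ≠ 0 := ne_of_gt ha''
          rw [hκ]
          field_simp
      rw [Finset.sum_congr rfl fun j _ => by rw [hκh j]]
      have expand : ∀ j : Fin (m + m),
          C z.2 j * ((∑ l, compInv m a j l * f1 (z.1, l)) + (a0 * g z.1 + c)) =
          (∑ l, C z.2 j * compInv m a j l * f1 (z.1, l)) + C z.2 j * (a0 * g z.1 + c) := by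
        intro j
        rw [mul_add, Finset.mul_sum]
        congr 1
        exact Finset.sum_congr rfl fun l _ => by ring
      rw [Finset.sum_congr rfl fun j _ => expand j, Finset.sum_add_distrib,
        ← Finset.sum_mul, hC, compConfusion_rowsum m hm, one_mul, Finset.sum_comm]
      have hone : ∀ l : Fin (m + m),
          ∑ j, C z.2 j * compInv m a j l * f1 (z.1, l) =
          (if (l : ℕ) = ((z.2 : Fin (m + m)) : ℕ) then f1 (z.1, l) else 0) := by
        intro l
        rw [← Finset.sum_mul, hC, compConfusion_mul_compInv m hm a ha1]
        split_ifs <;> ring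
      rw [Finset.sum_congr rfl fun l _ => hone l, fin_sum_ite_eq, dif_pos z.2.isLt]
      simp only [Fin.eta, Prod.mk.eta]
      ring
    have t1 : κ * ∑' z, corrupt P C z * h' z =
        ∑' z, P z * (f1 + (fun w : X × Fin (m + m) => a0 * g w.1) + Function.const (X × Fin (m + m)) c) z := by
      rw [← tsum_mul_left]
      rw [tsum_congr (fun z => by ring :
        ∀ z, κ * (corrupt P C z * h' z) = corrupt P C z * (κ * h' z))]
      rw [tsum_corrupt P hP0 hPs C (fun z => κ * h' z) (κ * B') hbig]
      exact tsum_congr fun z => by rw [hch z]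
    have t2 : κ * ∑' z, corrupt Q C z * h' z =
        ∑' z, Q z * (f1 + (fun w : X × Fin (m + m) => a0 * g w.1) + Function.const (X × Fin (m + m)) c) z := by
      rw [← tsum_mul_left]
      rw [tsum_congr (fun z => by ring :
        ∀ z, κ * (corrupt Q C z * h' z) = corrupt Q C z * (κ * h' z))]
      rw [tsum_corrupt Q hQ0 hQs C (fun z => κ * h' z) (κ * B') hbig]
      exact tsum_congr fun z => by rw [hch z]
    rw [mul_sub, t1, t2]
  -- nonnegativity of the corrupted supremum when F is nonempty
  have hS'nn : F.Nonempty → 0 ≤ sSup S' := by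
    rintro ⟨f, hfF⟩
    rw [hFeq] at hfF
    obtain ⟨f1, hf1, f2, hf2, c, -⟩ := hfF
    have hf2' := hf2
    rw [hF2eq] at hf2'
    obtain ⟨g, hg, a0, -, -, -⟩ := hf2'
    set h1 : X × Fin (m + m) → ℝ :=
      f1 + (fun z => (0:ℝ) * g z.1) + Function.const _ (0:ℝ) with hh1
    set h2 : X × Fin (m + m) → ℝ :=
      chanOp (-1) f1 + (fun z => (0:ℝ) * g z.1) + Function.const _ (0:ℝ) with hh2
    have hh1F : h1 ∈ F := by
      rw [hFeq]
      exact ⟨f1, hf1, _, by rw [hF2eq]; exact ⟨g, hg, 0, le_refl _, zero_le_one, rfl⟩,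
        0, rfl⟩
    have hh2F : h2 ∈ F := by
      rw [hFeq]
      exact ⟨chanOp (-1) f1, hF1inv _ matInfNorm_negOne f1 hf1, _,
        by rw [hF2eq]; exact ⟨g, hg, 0, le_refl _, zero_le_one, rfl⟩, 0, rfl⟩
    have hneg : ∀ z, h2 z = -(h1 z) := by
      intro z
      simp only [hh1, hh2, Pi.add_apply, Function.const_apply, chanOp_negOne]
      ring
    have hD2 : ((∑' z, corrupt P C z * h2 z) - ∑' z, corrupt Q C z * h2 z) =
        -((∑' z, corrupt P C z * h1 z) - ∑' z, corrupt Q C z * h1 z) := by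
      have e1 : ∑' z, corrupt P C z * h2 z = -∑' z, corrupt P C z * h1 z := by
        rw [← tsum_neg]
        exact tsum_congr fun z => by rw [hneg z]; ring
      have e2 : ∑' z, corrupt Q C z * h2 z = -∑' z, corrupt Q C z * h1 z := by
        rw [← tsum_neg]
        exact tsum_congr fun z => by rw [hneg z]; ring
      rw [e1, e2]; ring
    by_cases hbdd : BddAbove S'
    · have e1 : ((∑' z, corrupt P C z * h1 z) - ∑' z, corrupt Q C z * h1 z) ∈ S' :=
        ⟨h1, hh1F, rfl⟩
      have e2 : ((∑' z, corrupt P C z * h2 z) - ∑' z, corrupt Q C z * h2 z) ∈ S' :=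
        ⟨h2, hh2F, rfl⟩
      rcases le_or_gt 0 ((∑' z, corrupt P C z * h1 z) - ∑' z, corrupt Q C z * h1 z)
        with h | h
      · exact le_trans h (le_csSup hbdd e1)
      · refine le_trans ?_ (le_csSup hbdd e2)
        rw [hD2]; linarith
    · rw [Real.sSup_of_not_bddAbove hbdd]
  -- conclude
  by_cases hSb : BddAbove S
  · rcases Set.eq_empty_or_nonempty S with hSe | hSne
    · have hFe : F = ∅ := Set.image_eq_empty.mp hSe
      have hS'e : S' = ∅ := by rw [hS', hFe, Set.image_empty]
      rw [hSe, hS'e, Real.sSup_empty, mul_zero]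
    · refine csSup_le hSne ?_
      rintro s ⟨f, hfF, rfl⟩
      obtain ⟨h', hh'F, heq⟩ := hkey f hfF
      show ((∑' z, P z * f z) - ∑' z, Q z * f z) ≤ κ * sSup S'
      rw [heq]
      exact mul_le_mul_of_nonneg_left (le_csSup (hSb.mono hSS) ⟨h', hh'F, rfl⟩) hκ0.le
  · rw [Real.sSup_of_not_bddAbove hSb]
    have hFne : F.Nonempty := by
      by_contra hcon
      rw [Set.not_nonempty_iff_eq_empty] at hcon
      exact hSb (by rw [hS, hcon, Set.image_empty]; exact bddAbove_empty)
    exact mul_nonneg hκ0.le (hS'nn hFne)
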